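/- Let Ψ : ℝ → Isom(𝐄) be a continuous linear cocycle (ℝ-action by bundle isomorphisms over a flow ψ on a compact metric space 𝐁) which is quasi-hyperbolic, i.e. sup_{t∈ℝ} |Ψ_t(ξ)| = +∞ for every nonzero ξ ∈ 𝐄. Then there exists τ > 0 such that for all b ∈ 𝐁: ‖Ψ_τ|_{E^s(b)}‖ < 1/2 and ‖Ψ_{−τ}|_{E^u(b)}‖ < 1/2, where E^s(b) = {ξ : sup_{t>0}|Ψ_t ξ| < ∞} and E^u(b) = {ξ : sup_{t>0}|Ψ_{−t} ξ| < ∞}. -/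

import Mathlib

open Filter Topology

/-- A continuous linear cocycle (`ℝ`-action by bundle isomorphisms on the
trivial vector bundle `B × E`) over a continuous flow on `B`. -/
structure LinearCocycle (B E : Type*) [TopologicalSpace B]
    [NormedAddCommGroup E] [NormedSpace ℝ E] where
  flow : ℝ → B → B
  flow_cont : Continuous fun p : ℝ × B => flow p.1 p.2
  flow_zero : ∀ b, flow 0 b = b
  flow_add : ∀ s t b, flow s (flow t b) = flow (s + t) b
  P : ℝ → B → E →L[ℝ] E
  P_cont : Continuous fun p : ℝ × B => P p.1 p.2
  P_zero : ∀ b, P 0 b = ContinuousLinearMap.id ℝ E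
  P_comp : ∀ s t b, (P s (flow t b)).comp (P t b) = P (s + t) b

variable {B E : Type*} [TopologicalSpace B]
  [NormedAddCommGroup E] [NormedSpace ℝ E]

/-- Quasi-hyperbolicity: every nonzero vector has unbounded orbit. -/
def LinearCocycle.IsQuasiHyperbolic (Φ : LinearCocycle B E) : Prop :=
  ∀ b : B, ∀ v : E, v ≠ 0 → ∀ C : ℝ, ∃ t : ℝ, C < ‖Φ.P t b v‖

/-- The subspace of vectors with bounded forward orbit. -/
def LinearCocycle.stable (Φ : LinearCocycle B E) (b : B) : Submodule ℝ E where
  carrier := {v | ∃ C : ℝ, ∀ t > (0:ℝ), ‖Φ.P t b v‖ ≤ C}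
  add_mem' := by
    rintro u v ⟨C₁, h₁⟩ ⟨C₂, h₂⟩
    exact ⟨C₁ + C₂, fun t ht => by
      simpa [map_add] using (norm_add_le (Φ.P t b u) (Φ.P t b v)).trans
        (add_le_add (h₁ t ht) (h₂ t ht))⟩
  zero_mem' := ⟨0, fun t ht => by simp⟩
  smul_mem' := by
    rintro c v ⟨C, h⟩
    exact ⟨‖c‖ * C, fun t ht => by
      rw [map_smul, norm_smul]
      exact mul_le_mul_of_nonneg_left (h t ht) (norm_nonneg c)⟩

/-- The subspace of vectors with bounded backward orbit. -/
def LinearCocycle.unstable (Φ : LinearCocycle B E) (b : B) : Submodule ℝ E where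
  carrier := {v | ∃ C : ℝ, ∀ t > (0:ℝ), ‖Φ.P (-t) b v‖ ≤ C}
  add_mem' := by
    rintro u v ⟨C₁, h₁⟩ ⟨C₂, h₂⟩
    exact ⟨C₁ + C₂, fun t ht => by
      simpa [map_add] using (norm_add_le (Φ.P (-t) b u) (Φ.P (-t) b v)).trans
        (add_le_add (h₁ t ht) (h₂ t ht))⟩
  zero_mem' := ⟨0, fun t ht => by simp⟩
  smul_mem' := by
    rintro c v ⟨C, h⟩
    exact ⟨‖c‖ * C, fun t ht => by
      rw [map_smul, norm_smul]
      exact mul_le_mul_of_nonneg_left (h t ht) (norm_nonneg c)⟩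

/-- Uniform hyperbolicity of a linear cocycle over an invariant subset `Λ`. -/
def LinearCocycle.IsHyperbolicOn (Φ : LinearCocycle B E) (Λ : Set B) : Prop :=
  ∃ Es Eu : B → Submodule ℝ E,
    (∀ t : ℝ, ∀ b ∈ Λ, (Es b).map (Φ.P t b : E →ₗ[ℝ] E) = Es (Φ.flow t b)) ∧
    (∀ t : ℝ, ∀ b ∈ Λ, (Eu b).map (Φ.P t b : E →ₗ[ℝ] E) = Eu (Φ.flow t b)) ∧
    (∀ b ∈ Λ, IsCompl (Es b) (Eu b)) ∧
    ∃ T > (0:ℝ), ∀ b ∈ Λ,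
      (∀ v ∈ Es b, v ≠ 0 → ‖Φ.P T b v‖ < (1/2) * ‖v‖) ∧
      (∀ v ∈ Eu b, v ≠ 0 → ‖Φ.P (-T) b v‖ < (1/2) * ‖v‖)

/-- The cocycle identity, applied to a vector. -/
lemma LinearCocycle.P_apply_comp (Φ : LinearCocycle B E) (s t : ℝ) (b : B) (v : E) :
    Φ.P s (Φ.flow t b) (Φ.P t b v) = Φ.P (s + t) b v := by
  rw [← ContinuousLinearMap.comp_apply, Φ.P_comp]

/-- Over a compact base, operator norms are uniformly bounded on compact time
intervals. -/
lemma LinearCocycle.exists_op_bound (Φ : LinearCocycle B E) [CompactSpace B] (r : ℝ) :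
    ∃ M : ℝ, ∀ t : ℝ, |t| ≤ r → ∀ b : B, ‖Φ.P t b‖ ≤ M := by
  obtain ⟨M, hM⟩ := ((isCompact_Icc (a := -r) (b := r)).prod
    (isCompact_univ (X := B))).exists_bound_of_continuousOn Φ.P_cont.continuousOn
  exact ⟨M, fun t ht b => hM (t, b) ⟨abs_le.1 ht, Set.mem_univ _⟩⟩

/-- Compactness extraction: from a sequence of (uniformly eventually) bounded
orbits of vectors of norm at least `ε` living in a compact set, produce a
nonzero vector whose full orbit is bounded. -/
lemma LinearCocycle.exists_full_orbit_bound (Φ : LinearCocycle B E) [CompactSpace B]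
    (c : ℕ → B) (w : ℕ → E) {K : Set E} (hK : IsCompact K) (hwK : ∀ n, w n ∈ K)
    {ε C : ℝ} (hε : 0 < ε) (hεw : ∀ n, ε ≤ ‖w n‖)
    (hb : ∀ r : ℝ, ∀ᶠ n in atTop, ‖Φ.P r (c n) (w n)‖ ≤ C) :
    ∃ b : B, ∃ v : E, v ≠ 0 ∧ ∀ r : ℝ, ‖Φ.P r b v‖ ≤ C := by
  set p : ℕ → B × E := fun n => (c n, w n) with hp
  have hKc : IsCompact ((Set.univ : Set B) ×ˢ K) := isCompact_univ.prod hK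
  have hle : Filter.map p Filter.atTop ≤ 𝓟 (Set.univ ×ˢ K) :=
    Filter.le_principal_iff.2 <| Filter.eventually_map.2 <|
      Filter.Eventually.of_forall fun n => ⟨trivial, hwK n⟩
  obtain ⟨x, -, hx⟩ := hKc.exists_clusterPt hle
  have key : ∀ S : Set (B × E), IsClosed S → (∀ᶠ n in Filter.atTop, p n ∈ S) → x ∈ S := by
    intro S hS hev
    have h1 : ClusterPt x (𝓟 S) := hx.mono (Filter.le_principal_iff.2 hev)
    simpa [hS.closure_eq] using mem_closure_iff_clusterPt.2 h1
  have hx2 : ε ≤ ‖x.2‖ :=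
    key {q : B × E | ε ≤ ‖q.2‖}
      (isClosed_le continuous_const continuous_snd.norm)
      (Filter.Eventually.of_forall fun n => hεw n)
  refine ⟨x.1, x.2, fun h0 => by rw [h0] at hx2; simp at hx2; linarith, fun r => ?_⟩
  exact key {q : B × E | ‖Φ.P r q.1 q.2‖ ≤ C}
    (isClosed_le (((Φ.P_cont.comp
      ((continuous_const (y := r)).prodMk continuous_fst)).clm_apply
      continuous_snd).norm) continuous_const)
    (hb r)

/-- First step of the proof: there is a uniform bound on the forward orbits of
stable vectors. -/
lemma LinearCocycle.uniform_stable_bound (Φ : LinearCocycle B E) [CompactSpace B]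
    [FiniteDimensional ℝ E] (hqh : Φ.IsQuasiHyperbolic) :
    ∃ C : ℝ, ∀ b : B, ∀ v ∈ Φ.stable b, ∀ t : ℝ, 0 ≤ t → ‖Φ.P t b v‖ ≤ C * ‖v‖ := by
  by_contra hcon
  push_neg at hcon
  have main : ∀ n : ℕ, ∃ (c : B) (w : E) (s : ℝ) (b' : B), ‖w‖ = 1 ∧ 0 ≤ s ∧
      ((n : ℝ) + 1 < ‖Φ.P s b'‖) ∧ ∀ r : ℝ, -s ≤ r → ‖Φ.P r c w‖ ≤ 2 := by
    intro n
    obtain ⟨b, v, hvst, t, ht0, hlt⟩ := hcon ((n : ℝ) + 2)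
    have hv0 : v ≠ 0 := by
      rintro rfl
      simp at hlt
    have hvpos : 0 < ‖v‖ := norm_pos_iff.2 hv0
    set u : E := ‖v‖⁻¹ • v with hu_def
    have hust : u ∈ Φ.stable b := (Φ.stable b).smul_mem _ hvst
    have hunorm : ‖u‖ = 1 := by
      rw [hu_def, norm_smul, norm_inv, norm_norm, inv_mul_cancel₀ (ne_of_gt hvpos)]
    set f : ℝ → ℝ := fun s => ‖Φ.P s b u‖ with hf_def
    have hfval : ∀ s, f s = ‖v‖⁻¹ * ‖Φ.P s b v‖ := by
      intro s
      rw [hf_def]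
      simp only [hu_def, map_smul, norm_smul, norm_inv, norm_norm]
    have hft : (n : ℝ) + 2 < f t := by
      rw [hfval]
      have := mul_lt_mul_of_pos_left hlt (inv_pos.2 hvpos)
      rwa [show ‖v‖⁻¹ * (((n : ℝ) + 2) * ‖v‖) = ((n : ℝ) + 2) * (‖v‖⁻¹ * ‖v‖) by ring,
        inv_mul_cancel₀ (ne_of_gt hvpos), mul_one] at this
    set A : Set ℝ := f '' Set.Ici 0 with hA_def
    have hAne : A.Nonempty := ⟨f t, t, ht0, rfl⟩
    obtain ⟨C', hC'⟩ := hust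
    have hAbdd : BddAbove A := by
      refine ⟨max C' (f 0), ?_⟩
      rintro y ⟨s, hs, rfl⟩
      rcases eq_or_lt_of_le (Set.mem_Ici.mp hs) with h | h
      · rw [← h]; exact le_max_right _ _
      · exact le_trans (hC' s h) (le_max_left _ _)
    set S : ℝ := sSup A with hS_def
    have hSn : (n : ℝ) + 2 < S := lt_of_lt_of_le hft (le_csSup hAbdd ⟨t, ht0, rfl⟩)
    obtain ⟨y, ⟨s, hs0, rfl⟩, hy⟩ := exists_lt_of_lt_csSup hAne (show S - 1 < S by linarith)
    have hfs_pos : 0 < f s := by linarith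
    refine ⟨Φ.flow s b, (f s)⁻¹ • Φ.P s b u, s, b, ?_, hs0, ?_, ?_⟩
    · rw [norm_smul, norm_inv, Real.norm_eq_abs, abs_of_pos hfs_pos,
        inv_mul_cancel₀ (ne_of_gt hfs_pos)]
    · calc (n : ℝ) + 1 < S - 1 := by linarith
        _ < f s := hy
        _ = ‖Φ.P s b u‖ := rfl
        _ ≤ ‖Φ.P s b‖ * ‖u‖ := (Φ.P s b).le_opNorm u
        _ = ‖Φ.P s b‖ := by rw [hunorm, mul_one]
    · intro r hr
      have hrs : 0 ≤ r + s := by linarith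
      have hnorm_eq : ‖Φ.P r (Φ.flow s b) ((f s)⁻¹ • Φ.P s b u)‖ = (f s)⁻¹ * f (r + s) := by
        rw [map_smul, norm_smul, norm_inv, Real.norm_eq_abs, abs_of_pos hfs_pos,
          Φ.P_apply_comp]
      rw [hnorm_eq]
      have hS1 : (0 : ℝ) < S - 1 := by linarith
      have h1 : f (r + s) ≤ S := le_csSup hAbdd ⟨r + s, hrs, rfl⟩
      have h2 : (f s)⁻¹ ≤ (S - 1)⁻¹ := by
        apply inv_anti₀ hS1 (le_of_lt hy)
      calc (f s)⁻¹ * f (r + s) ≤ (S - 1)⁻¹ * S := by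
            apply mul_le_mul h2 h1 (norm_nonneg _) (by positivity)
        _ ≤ (S - 1)⁻¹ * (2 * (S - 1)) := by
            apply mul_le_mul_of_nonneg_left (by linarith) (by positivity)
        _ = 2 := by field_simp
  choose c w s b' hw hs0 hub hbd using main
  have hb : ∀ r : ℝ, ∀ᶠ n in atTop, ‖Φ.P r (c n) (w n)‖ ≤ 2 := by
    intro r
    obtain ⟨M, hM⟩ := Φ.exists_op_bound |r|
    refine Filter.eventually_atTop.2 ⟨⌈M⌉₊, fun n hn => ?_⟩
    have hMn : M < (n : ℝ) + 1 := by
      have h1 : M ≤ (⌈M⌉₊ : ℝ) := Nat.le_ceil M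
      have h2 : ((⌈M⌉₊ : ℕ) : ℝ) ≤ (n : ℝ) := Nat.cast_le.2 hn
      linarith
    have hsr : -(s n) ≤ r := by
      by_contra hlt
      push_neg at hlt
      have hsn : s n ≤ |r| := by
        rw [abs_of_nonpos (by linarith [hs0 n] : r ≤ 0)]
        linarith
      have := hM (s n) (by rw [abs_of_nonneg (hs0 n)]; exact hsn) (b' n)
      linarith [hub n]
    exact hbd n r hsr
  obtain ⟨b, v, hv0, hball⟩ := Φ.exists_full_orbit_bound c w (isCompact_sphere (0 : E) 1)
    (fun n => by simpa [mem_sphere_iff_norm] using hw n) one_pos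
    (fun n => (hw n).ge) hb
  obtain ⟨t, ht⟩ := hqh b v hv0 2
  exact absurd (hball t) (not_le.2 ht)

/-- Second step: uniform eventual contraction on the stable bundle. -/
lemma LinearCocycle.stable_contraction (Φ : LinearCocycle B E) [CompactSpace B]
    [FiniteDimensional ℝ E] (hqh : Φ.IsQuasiHyperbolic) {ε : ℝ} (hε : 0 < ε) :
    ∃ τ : ℝ, 0 < τ ∧ ∀ t : ℝ, τ ≤ t → ∀ b : B, ∀ v ∈ Φ.stable b,
      ‖Φ.P t b v‖ ≤ ε * ‖v‖ := by
  obtain ⟨C₀, hC₀⟩ := Φ.uniform_stable_bound hqh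
  set C : ℝ := max C₀ 1 with hC_def
  have hC1 : (1 : ℝ) ≤ C := le_max_right _ _
  have hCb : ∀ b : B, ∀ v ∈ Φ.stable b, ∀ t : ℝ, 0 ≤ t → ‖Φ.P t b v‖ ≤ C * ‖v‖ :=
    fun b v hv t ht => (hC₀ b v hv t ht).trans
      (mul_le_mul_of_nonneg_right (le_max_left _ _) (norm_nonneg _))
  by_contra hcon
  push_neg at hcon
  have main : ∀ n : ℕ, ∃ (c : B) (w : E) (t : ℝ), ‖w‖ ≤ C ∧ ε < ‖w‖ ∧
      (n : ℝ) + 1 ≤ t ∧ ∀ r : ℝ, -t ≤ r → ‖Φ.P r c w‖ ≤ C := by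
    intro n
    obtain ⟨t, htn, b, v, hvst, hlt⟩ := hcon ((n : ℝ) + 1) (by positivity)
    have hv0 : v ≠ 0 := by
      rintro rfl
      simp at hlt
    have hvpos : 0 < ‖v‖ := norm_pos_iff.2 hv0
    set u : E := ‖v‖⁻¹ • v with hu_def
    have hust : u ∈ Φ.stable b := (Φ.stable b).smul_mem _ hvst
    have hunorm : ‖u‖ = 1 := by
      rw [hu_def, norm_smul, norm_inv, norm_norm, inv_mul_cancel₀ (ne_of_gt hvpos)]
    have ht0 : 0 ≤ t := by
      have : (0 : ℝ) ≤ (n : ℝ) + 1 := by positivity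
      linarith
    have hεu : ε < ‖Φ.P t b u‖ := by
      have heq : ‖Φ.P t b u‖ = ‖v‖⁻¹ * ‖Φ.P t b v‖ := by
        simp only [hu_def, map_smul, norm_smul, norm_inv, norm_norm]
      rw [heq]
      have := mul_lt_mul_of_pos_left hlt (inv_pos.2 hvpos)
      rwa [show ‖v‖⁻¹ * (ε * ‖v‖) = ε * (‖v‖⁻¹ * ‖v‖) by ring,
        inv_mul_cancel₀ (ne_of_gt hvpos), mul_one] at this
    refine ⟨Φ.flow t b, Φ.P t b u, t, ?_, hεu, htn, ?_⟩
    · have := hCb b u hust t ht0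
      rwa [hunorm, mul_one] at this
    · intro r hr
      rw [Φ.P_apply_comp]
      have := hCb b u hust (r + t) (by linarith)
      rwa [hunorm, mul_one] at this
  choose c w t hwC hεw htn hbd using main
  have hb : ∀ r : ℝ, ∀ᶠ n in atTop, ‖Φ.P r (c n) (w n)‖ ≤ C := by
    intro r
    refine Filter.eventually_atTop.2 ⟨⌈-r⌉₊, fun n hn => ?_⟩
    have h1 : -r ≤ (⌈-r⌉₊ : ℝ) := Nat.le_ceil (-r)
    have h2 : ((⌈-r⌉₊ : ℕ) : ℝ) ≤ (n : ℝ) := Nat.cast_le.2 hn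
    exact hbd n r (by linarith [htn n])
  obtain ⟨b, v, hv0, hball⟩ := Φ.exists_full_orbit_bound c w
    (isCompact_closedBall (0 : E) C)
    (fun n => by simpa [Metric.mem_closedBall, dist_zero_right] using hwC n) hε
    (fun n => (hεw n).le) hb
  obtain ⟨r, hr⟩ := hqh b v hv0 C
  exact absurd (hball r) (not_le.2 hr)

/-- The time-reversed cocycle. -/
def LinearCocycle.reverse (Φ : LinearCocycle B E) : LinearCocycle B E where
  flow t b := Φ.flow (-t) b
  flow_cont := Φ.flow_cont.comp ((continuous_neg.comp continuous_fst).prodMk continuous_snd)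
  flow_zero b := by simpa using Φ.flow_zero b
  flow_add s t b := by rw [Φ.flow_add, neg_add]
  P t b := Φ.P (-t) b
  P_cont := Φ.P_cont.comp ((continuous_neg.comp continuous_fst).prodMk continuous_snd)
  P_zero b := by simpa using Φ.P_zero b
  P_comp s t b := by rw [Φ.P_comp, neg_add]

lemma LinearCocycle.reverse_qh (Φ : LinearCocycle B E) (hqh : Φ.IsQuasiHyperbolic) :
    Φ.reverse.IsQuasiHyperbolic := by
  intro b v hv C
  obtain ⟨t, ht⟩ := hqh b v hv C
  exact ⟨-t, by simpa [LinearCocycle.reverse] using ht⟩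

lemma LinearCocycle.mem_reverse_stable (Φ : LinearCocycle B E) {b : B} {v : E} :
    v ∈ Φ.reverse.stable b ↔ v ∈ Φ.unstable b := Iff.rfl

/-- For a quasi-hyperbolic continuous linear cocycle over a compact base there
is `τ > 0` such that `‖Ψ_τ|_{E^s(b)}‖ < 1/2` and `‖Ψ_{-τ}|_{E^u(b)}‖ < 1/2`
for every `b`. -/
theorem quasi_hyperbolic_uniform_contraction
    [CompactSpace B] [FiniteDimensional ℝ E]
    (Φ : LinearCocycle B E) (hqh : Φ.IsQuasiHyperbolic) :
    ∃ τ > (0:ℝ), ∀ b : B,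
      (∀ v ∈ Φ.stable b, v ≠ 0 → ‖Φ.P τ b v‖ < (1/2) * ‖v‖) ∧
      (∀ v ∈ Φ.unstable b, v ≠ 0 → ‖Φ.P (-τ) b v‖ < (1/2) * ‖v‖) := by
  obtain ⟨τ₁, hτ₁, h₁⟩ := Φ.stable_contraction hqh (ε := 1/4) (by norm_num)
  obtain ⟨τ₂, hτ₂, h₂⟩ := Φ.reverse.stable_contraction (Φ.reverse_qh hqh) (ε := 1/4)
    (by norm_num)
  refine ⟨max τ₁ τ₂, lt_max_of_lt_left hτ₁, fun b => ⟨?_, ?_⟩⟩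
  · intro v hv hv0
    have h := h₁ (max τ₁ τ₂) (le_max_left _ _) b v hv
    have hn : 0 < ‖v‖ := norm_pos_iff.2 hv0
    linarith
  · intro v hv hv0
    have h : ‖Φ.P (-(max τ₁ τ₂)) b v‖ ≤ (1/4) * ‖v‖ :=
      h₂ (max τ₁ τ₂) (le_max_right _ _) b v (Φ.mem_reverse_stable.2 hv)
    have hn : 0 < ‖v‖ := norm_pos_iff.2 hv0
    linarith
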